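/- Let $v_1,\dots,v_n \in \mathbb{R}^3$, $p > 2$, fix $x \ne 0$ with $\sum_i \max(v_i^T x,0)^p > 0$, and set $a_i = \max(v_i^T x, 0)$, $V = [v_1,\dots,v_n]$, $\tilde{a}_p = \sum_i a_i^p$. Define $A = \tilde{a}_p^{1/p - 1}\,\mathrm{diag}(a_i^{p-2}) - \tilde{a}_p^{1/p - 2}\,\hat{a}_{p-1}\hat{a}_{p-1}^T$ where $\hat{a}_{p-1} = (a_1^{p-1},\dots,a_n^{p-1})^T$. Then the matrix $\frac{ds}{dx} = (p-1) V A V^T \in \mathbb{R}^{3\times 3}$ is positive semi-definite. -/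

import Mathlib

open Matrix

theorem stmt9 (n : ℕ) (v : Fin n → Fin 3 → ℝ) (p : ℝ) (hp : 2 < p)
    (x : Fin 3 → ℝ) (hx : x ≠ 0)
    (a : Fin n → ℝ) (hadef : ∀ i, a i = max (v i ⬝ᵥ x) 0)
    (hpos : 0 < ∑ i, a i ^ p)
    (V : Matrix (Fin 3) (Fin n) ℝ) (hV : V = Matrix.of fun r i => v i r)
    (A : Matrix (Fin n) (Fin n) ℝ)
    (hA : A = (∑ i, a i ^ p) ^ (1 / p - 1) • Matrix.diagonal (fun i => a i ^ (p - 2))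
        - (∑ i, a i ^ p) ^ (1 / p - 2) •
            Matrix.of (fun i j => a i ^ (p - 1) * a j ^ (p - 1))) :
    ((p - 1) • (V * A * Vᵀ)).PosSemidef := by
  have ha : ∀ i, 0 ≤ a i := fun i => (hadef i) ▸ le_max_right _ _
  set S := ∑ i, a i ^ p with hS
  have hSne : S ≠ 0 := ne_of_gt hpos
  -- A is positive semidefinite
  have hApsd : A.PosSemidef := by
    rw [Matrix.posSemidef_iff_dotProduct_mulVec]
    constructor
    · -- Hermitian
      rw [hA]
      ext i j
      simp [Matrix.diagonal, Matrix.conjTranspose_apply]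
      by_cases h : i = j <;> simp [h, mul_comm]
      exact fun h' => absurd h'.symm h
    · intro u
      have key : star u ⬝ᵥ (A *ᵥ u) =
          S ^ (1 / p - 1) * (∑ i, a i ^ (p - 2) * u i ^ 2)
            - S ^ (1 / p - 2) * (∑ i, a i ^ (p - 1) * u i) ^ 2 := by
        rw [hA]
        simp only [Matrix.sub_mulVec, Matrix.smul_mulVec, dotProduct_sub,
          dotProduct_smul, star_trivial, smul_eq_mul]
        congr 1
        · congr 1
          simp only [dotProduct, Matrix.mulVec_diagonal]
          exact Finset.sum_congr rfl fun i _ => by ring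
        · congr 1
          have : ∀ i, (Matrix.of (fun i j => a i ^ (p - 1) * a j ^ (p - 1)) *ᵥ u) i
              = a i ^ (p - 1) * ∑ j, a j ^ (p - 1) * u j := by
            intro i
            simp only [Matrix.mulVec, dotProduct, Matrix.of_apply, Finset.mul_sum]
            exact Finset.sum_congr rfl fun j _ => by ring
          simp only [dotProduct, this, sq, Finset.sum_mul]
          exact Finset.sum_congr rfl fun i _ => by ring
      rw [key]
      have hc1 : S ^ (1 / p - 1) = S ^ (1 / p - 2) * S := by
        rw [show (1 / p - 1 : ℝ) = (1 / p - 2) + 1 by ring, Real.rpow_add hpos, Real.rpow_one]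
      rw [hc1, mul_assoc, ← mul_sub]
      apply mul_nonneg (Real.rpow_nonneg hpos.le _)
      rw [sub_nonneg]
      -- Cauchy-Schwarz
      have cs := Finset.sum_mul_sq_le_sq_mul_sq Finset.univ
        (fun i => a i ^ (p / 2)) (fun i => a i ^ (p / 2 - 1) * u i)
      have h1 : ∀ i, a i ^ (p / 2) * (a i ^ (p / 2 - 1) * u i) = a i ^ (p - 1) * u i := by
        intro i
        rw [← mul_assoc, ← Real.rpow_add' (ha i) (by intro h; linarith [show p/2 + (p/2-1) = p - 1 by ring ▸ h] : p / 2 + (p / 2 - 1) ≠ 0)]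
        ring_nf
      have h2 : ∀ i, (a i ^ (p / 2)) ^ 2 = a i ^ p := by
        intro i
        rw [sq, ← Real.rpow_add' (ha i) (by positivity : p / 2 + p / 2 ≠ 0)]
        ring_nf
      have h3 : ∀ i, (a i ^ (p / 2 - 1) * u i) ^ 2 = a i ^ (p - 2) * u i ^ 2 := by
        intro i
        rw [mul_pow, sq (a i ^ (p / 2 - 1)),
          ← Real.rpow_add' (ha i) (by intro h; linarith [show (p/2-1) + (p/2-1) = p - 2 by ring ▸ h] : (p / 2 - 1) + (p / 2 - 1) ≠ 0)]
        ring_nf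
      simp only [h1, h2, h3] at cs
      calc (∑ i, a i ^ (p - 1) * u i) ^ 2
          ≤ (∑ i, a i ^ p) * ∑ i, a i ^ (p - 2) * u i ^ 2 := cs
        _ = S * ∑ i, a i ^ (p - 2) * u i ^ 2 := by rw [hS]
  -- conjugation and scaling
  have hVAV : (V * A * Vᵀ).PosSemidef := by
    have := hApsd.mul_mul_conjTranspose_same V
    simpa using this
  have hp1 : (0 : ℝ) ≤ p - 1 := by linarith
  rw [Matrix.posSemidef_iff_dotProduct_mulVec]
  constructor
  · show ((p - 1) • (V * A * Vᵀ))ᴴ = _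
    rw [Matrix.conjTranspose_smul, star_trivial, hVAV.1.eq]
  · intro u
    have := hVAV.dotProduct_mulVec_nonneg u
    simp only [Matrix.smul_mulVec, dotProduct_smul, smul_eq_mul]
    exact mul_nonneg hp1 this
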